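/- The Gaussian density values on the two manifolds are ordered oppositely: (min_{c∈ℝ} H(c))/e² > (12 - 3·inf_{x>0} h(x))/e² (on CP²#(CP²-bar) the Koiso–Cao soliton has strictly larger density than the Page metric), while (min_{c∈ℝ} F(c))/e² < (21/2 - inf_{x>0} f(x))/e² (on CP²#2(CP²-bar) the Wang–Zhu soliton has strictly smaller density than the Chen–LeBrun–Weber metric). -/

import Mathlib

open MeasureTheory Real Set

/-- The closed pentagon with vertices (-1,-1), (1,-1), (1,0), (0,1), (-1,1). -/
def P : Set (ℝ × ℝ) :=
  {p : ℝ × ℝ | -1 ≤ p.1 ∧ p.1 ≤ 1 ∧ -1 ≤ p.2 ∧ p.2 ≤ 1 ∧ p.1 + p.2 ≤ 1}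

/-- `F c = ∫_P e^{-c(x₁+x₂)} dx₁ dx₂` (Lebesgue measure on ℝ²). -/
noncomputable def F (c : ℝ) : ℝ := ∫ p in P, Real.exp (-c * (p.1 + p.2))

/-- The closed trapezium with vertices (2,-1), (-1,2), (-1,0), (0,-1). -/
def T : Set (ℝ × ℝ) :=
  {p : ℝ × ℝ | -1 ≤ p.1 ∧ -1 ≤ p.2 ∧ -1 ≤ p.1 + p.2 ∧ p.1 + p.2 ≤ 1}

/-- `H c = ∫_T e^{-c(x₁+x₂)} dx₁ dx₂` (Lebesgue measure on ℝ²). -/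
noncomputable def H (c : ℝ) : ℝ := ∫ p in T, Real.exp (-c * (p.1 + p.2))

/-- The Chen–LeBrun–Weber rational function. -/
noncomputable def f (x : ℝ) : ℝ :=
  3 * (32 + 176*x + 318*x^2 + 280*x^3 + 132*x^4 + 32*x^5 + 3*x^6) /
    (12 + 72*x + 138*x^2 + 120*x^3 + 54*x^4 + 12*x^5 + x^6)

/-- LeBrun's rational function for the Page metric. -/
noncomputable def h (x : ℝ) : ℝ :=
  (4 + 14*x + 16*x^2 + 3*x^3) / (x * (6 + 6*x + x^2))

lemma graphRegion {a b : ℝ} (l u : ℝ → ℝ) (hl : Continuous l) (hu : Continuous u)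
    (f : ℝ × ℝ → ℝ) (hf : Continuous f) :
    ∫ p in {p : ℝ × ℝ | p.1 ∈ Set.Icc a b ∧ p.2 ∈ Set.Icc (l p.1) (u p.1)}, f p =
      ∫ x in Set.Icc a b, ∫ y in Set.Icc (l x) (u x), f (x, y) := by
  set S := {p : ℝ × ℝ | p.1 ∈ Set.Icc a b ∧ p.2 ∈ Set.Icc (l p.1) (u p.1)} with hS
  have hSc : IsClosed S := by
    have : S = ({p : ℝ × ℝ | a ≤ p.1} ∩ {p | p.1 ≤ b}) ∩
        ({p | l p.1 ≤ p.2} ∩ {p | p.2 ≤ u p.1}) := by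
      ext p; simp only [hS, Set.mem_setOf_eq, Set.mem_Icc, Set.mem_inter_iff]
    rw [this]
    exact (((isClosed_le continuous_const continuous_fst).inter
      (isClosed_le continuous_fst continuous_const)).inter
      ((isClosed_le (hl.comp continuous_fst) continuous_snd).inter
      (isClosed_le continuous_snd (hu.comp continuous_fst))))
  have hSm : MeasurableSet S := hSc.measurableSet
  obtain ⟨C1, hC1⟩ := isCompact_Icc.exists_bound_of_continuousOn (hl.continuousOn (s := Set.Icc a b))
  obtain ⟨C2, hC2⟩ := isCompact_Icc.exists_bound_of_continuousOn (hu.continuousOn (s := Set.Icc a b))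
  have hsub : S ⊆ Set.Icc a b ×ˢ Set.Icc (-(|C1|+|C2|)) (|C1|+|C2|) := by
    rintro ⟨x, y⟩ ⟨hx, hy⟩
    have h1 := hC1 x hx; have h2 := hC2 x hx
    simp only [Real.norm_eq_abs] at h1 h2
    constructor
    · exact hx
    · constructor
      · have := hy.1; have := abs_le.1 (h1.trans (le_abs_self C1)); simp at *; nlinarith [abs_nonneg C2, le_abs_self C2, neg_abs_le (l x)]
      · have := hy.2; have : u x ≤ |C2| := (le_abs_self (u x)).trans (h2.trans (le_abs_self C2))
        nlinarith [abs_nonneg C1, hy.2]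
  have hK : IsCompact S := (isCompact_Icc.prod isCompact_Icc).of_isClosed_subset hSc hsub
  have hInt : IntegrableOn f S := hf.continuousOn.integrableOn_compact hK
  rw [← integral_indicator hSm]
  rw [Measure.volume_eq_prod]
  rw [integral_prod]
  · have key : ∀ x, (∫ y, S.indicator f (x, y)) =
        (Set.Icc a b).indicator (fun x => ∫ y in Set.Icc (l x) (u x), f (x, y)) x := by
      intro x
      by_cases hx : x ∈ Set.Icc a b
      · rw [Set.indicator_of_mem hx, ← integral_indicator measurableSet_Icc]
        congr 1; ext y
        by_cases hy : y ∈ Set.Icc (l x) (u x)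
        · rw [Set.indicator_of_mem hy, Set.indicator_of_mem (by exact ⟨hx, hy⟩)]
        · rw [Set.indicator_of_notMem hy, Set.indicator_of_notMem (fun hmem => hy hmem.2)]
      · have : ∀ y, S.indicator f (x, y) = 0 := by
          intro y; exact Set.indicator_of_notMem (fun hmem => hx hmem.1) _
        simp only [this, integral_zero, Set.indicator_of_notMem hx]
    simp_rw [key]
    rw [integral_indicator measurableSet_Icc]
  · rw [← Measure.volume_eq_prod]
    exact (integrable_indicator_iff hSm).2 hInt

lemma inner_eval (g G : ℝ → ℝ) (hg : Continuous g) (hG : ∀ s, HasDerivAt G (g s) s)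
    (x c d : ℝ) (hcd : c ≤ d) :
    ∫ y in Set.Icc c d, g (x + y) = G (x + d) - G (x + c) := by
  rw [MeasureTheory.integral_Icc_eq_integral_Ioc, ← intervalIntegral.integral_of_le hcd]
  have : ∀ y ∈ Set.uIcc c d, HasDerivAt (fun y => G (x + y)) (g (x + y)) y := by
    intro y _
    simpa [Function.comp_def] using (hG (x + y)).comp y ((hasDerivAt_id y).const_add x)
  rw [intervalIntegral.integral_eq_sub_of_hasDerivAt this
    ((hg.comp (continuous_const.add continuous_id)).intervalIntegrable c d)]

lemma line_null : (volume : Measure (ℝ × ℝ)) {p : ℝ × ℝ | p.1 = (0:ℝ)} = 0 := by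
  have : {p : ℝ × ℝ | p.1 = (0:ℝ)} = ({0} : Set ℝ) ×ˢ (Set.univ : Set ℝ) := by
    ext ⟨x, y⟩; simp [eq_comm]
  rw [this, Measure.volume_eq_prod, Measure.prod_prod]
  simp

lemma master_T (g G Φ : ℝ → ℝ) (hg : Continuous g) (hGc : Continuous G)
    (hG : ∀ s, HasDerivAt G (g s) s) (hΦ : ∀ s, HasDerivAt Φ (G s) s) :
    ∫ p in T, g (p.1 + p.2) = 3 * G 1 - G (-1) - (Φ 1 - Φ (-1)) := by
  have hf : Continuous fun p : ℝ × ℝ => g (p.1 + p.2) :=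
    hg.comp (continuous_fst.add continuous_snd)
  set S1 := {p : ℝ × ℝ | p.1 ∈ Set.Icc (-1:ℝ) 0 ∧ p.2 ∈ Set.Icc (-1 - p.1) (1 - p.1)}
  set S2 := {p : ℝ × ℝ | p.1 ∈ Set.Ioc (0:ℝ) 2 ∧ p.2 ∈ Set.Icc (-1:ℝ) (1 - p.1)}
  set S2' := {p : ℝ × ℝ | p.1 ∈ Set.Icc (0:ℝ) 2 ∧ p.2 ∈ Set.Icc (-1:ℝ) (1 - p.1)}
  have hTS : T = S1 ∪ S2 := by
    ext ⟨x, y⟩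
    simp only [T, S1, S2, Set.mem_setOf_eq, Set.mem_union, Set.mem_Icc, Set.mem_Ioc]
    constructor
    · rintro ⟨h1, h2, h3, h4⟩
      rcases le_or_gt x 0 with hx | hx
      · exact Or.inl ⟨⟨h1, hx⟩, by constructor <;> linarith⟩
      · exact Or.inr ⟨⟨hx, by linarith⟩, h2, by linarith⟩
    · rintro (⟨⟨h1, h2⟩, h3, h4⟩ | ⟨⟨h1, h2⟩, h3, h4⟩) <;>
        refine ⟨by linarith, by linarith, by linarith, by linarith⟩
  have hS1m : MeasurableSet S1 := by
    have : S1 = ({p : ℝ × ℝ | -1 ≤ p.1} ∩ {p | p.1 ≤ 0}) ∩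
        ({p | -1 - p.1 ≤ p.2} ∩ {p | p.2 ≤ 1 - p.1}) := by
      ext p; simp only [S1, Set.mem_setOf_eq, Set.mem_Icc, Set.mem_inter_iff]
    rw [this]
    exact (((isClosed_le continuous_const continuous_fst).inter
      (isClosed_le continuous_fst continuous_const)).inter
      ((isClosed_le (by fun_prop) continuous_snd).inter
      (isClosed_le continuous_snd (by fun_prop)))).measurableSet
  have hS2m : MeasurableSet S2 := by
    have : S2 = (Prod.fst ⁻¹' Set.Ioc (0:ℝ) 2) ∩
        ({p : ℝ × ℝ | -1 ≤ p.2} ∩ {p | p.2 ≤ 1 - p.1}) := by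
      ext p; simp only [S2, Set.mem_setOf_eq, Set.mem_Icc, Set.mem_inter_iff,
        Set.mem_preimage]
    rw [this]
    exact (measurable_fst measurableSet_Ioc).inter
      (((isClosed_le continuous_const continuous_snd).inter
      (isClosed_le continuous_snd (by fun_prop))).measurableSet)
  have hdisj : Disjoint S1 S2 := by
    rw [Set.disjoint_left]
    rintro p ⟨hp1, _⟩ ⟨hq1, _⟩
    exact absurd hp1.2 (not_le.2 hq1.1)
  have hTc : IsCompact T := by
    have hcl : IsClosed T := by
      have : T = ({p : ℝ × ℝ | -1 ≤ p.1} ∩ {p | -1 ≤ p.2}) ∩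
          ({p | -1 ≤ p.1 + p.2} ∩ {p | p.1 + p.2 ≤ 1}) := by
        ext p; simp only [T, Set.mem_setOf_eq, Set.mem_inter_iff]; tauto
      rw [this]
      exact ((isClosed_le continuous_const continuous_fst).inter
        (isClosed_le continuous_const continuous_snd)).inter
        ((isClosed_le continuous_const (by fun_prop)).inter
        (isClosed_le (by fun_prop) continuous_const))
    refine ((isCompact_Icc (a := (-1:ℝ)) (b := 2)).prod
      (isCompact_Icc (a := (-1:ℝ)) (b := 2))).of_isClosed_subset hcl ?_
    rintro ⟨x, y⟩ ⟨h1, h2, h3, h4⟩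
    exact ⟨⟨h1, by linarith⟩, ⟨h2, by linarith⟩⟩
  have hIntT : IntegrableOn (fun p : ℝ × ℝ => g (p.1 + p.2)) T :=
    hf.continuousOn.integrableOn_compact hTc
  have hI1 : IntegrableOn (fun p : ℝ × ℝ => g (p.1 + p.2)) S1 :=
    hIntT.mono_set (by rw [hTS]; exact Set.subset_union_left)
  have hI2 : IntegrableOn (fun p : ℝ × ℝ => g (p.1 + p.2)) S2 :=
    hIntT.mono_set (by rw [hTS]; exact Set.subset_union_right)
  have hS2ae : S2 =ᵐ[volume] S2' := by
    rw [Filter.eventuallyEq_set]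
    filter_upwards [measure_eq_zero_iff_ae_notMem.1 line_null] with p hp
    simp only [S2, S2', Set.mem_setOf_eq, Set.mem_Ioc, Set.mem_Icc] at *
    constructor
    · rintro ⟨⟨h1, h2⟩, h3⟩; exact ⟨⟨le_of_lt h1, h2⟩, h3⟩
    · rintro ⟨⟨h1, h2⟩, h3⟩
      refine ⟨⟨lt_of_le_of_ne h1 ?_, h2⟩, h3⟩
      intro hx; exact hp hx.symm
  rw [hTS, setIntegral_union hdisj hS2m hI1 hI2, setIntegral_congr_set hS2ae]
  have e1 : ∫ p in S1, g (p.1 + p.2) = G 1 - G (-1) := by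
    rw [show (∫ p in S1, g (p.1 + p.2)) =
        ∫ x in Set.Icc (-1:ℝ) 0, ∫ y in Set.Icc (-1 - x) (1 - x), g (x + y) from
      graphRegion (fun x => -1 - x) (fun x => 1 - x) (by fun_prop) (by fun_prop) _ hf]
    have : ∀ x ∈ Set.Icc (-1:ℝ) 0, (∫ y in Set.Icc (-1 - x) (1 - x), g (x + y)) = G 1 - G (-1) := by
      intro x _
      rw [inner_eval g G hg hG x (-1 - x) (1 - x) (by linarith)]
      ring_nf
    rw [setIntegral_congr_fun measurableSet_Icc this, setIntegral_const]
    simp [Real.volume_Icc]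
  have e2 : ∫ p in S2', g (p.1 + p.2) = 2 * G 1 - Φ 1 + Φ (-1) := by
    rw [show (∫ p in S2', g (p.1 + p.2)) =
        ∫ x in Set.Icc (0:ℝ) 2, ∫ y in Set.Icc (-1:ℝ) (1 - x), g (x + y) from
      graphRegion (fun _ => (-1:ℝ)) (fun x => 1 - x) (by fun_prop) (by fun_prop) _ hf]
    have : ∀ x ∈ Set.Icc (0:ℝ) 2, (∫ y in Set.Icc (-1:ℝ) (1 - x), g (x + y))
        = G 1 - G (x - 1) := by
      intro x hx
      rw [inner_eval g G hg hG x (-1) (1 - x) (by cases hx; linarith)]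
      ring_nf
    rw [setIntegral_congr_fun measurableSet_Icc this]
    rw [MeasureTheory.integral_Icc_eq_integral_Ioc, ← intervalIntegral.integral_of_le (by norm_num : (0:ℝ) ≤ 2)]
    have hder : ∀ x ∈ Set.uIcc (0:ℝ) 2,
        HasDerivAt (fun x => x * G 1 - Φ (x - 1)) (G 1 - G (x - 1)) x := by
      intro x _
      have h1 : HasDerivAt (fun x : ℝ => x * G 1) (G 1) x := by
        simpa using (hasDerivAt_id x).mul_const (G 1)
      have h2 : HasDerivAt (fun x : ℝ => Φ (x - 1)) (G (x - 1)) x := by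
        simpa [Function.comp_def] using (hΦ (x - 1)).comp x ((hasDerivAt_id x).sub_const 1)
      exact h1.sub h2
    rw [intervalIntegral.integral_eq_sub_of_hasDerivAt hder
      ((continuous_const.sub (hGc.comp (by fun_prop))).intervalIntegrable 0 2)]
    ring
  rw [e1, e2]; ring

lemma isCompact_P : IsCompact P := by
  have hcl : IsClosed P := by
    have : P = ({p : ℝ × ℝ | -1 ≤ p.1} ∩ {p | p.1 ≤ 1}) ∩
        (({p | -1 ≤ p.2} ∩ {p | p.2 ≤ 1}) ∩ {p | p.1 + p.2 ≤ 1}) := by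
      ext p; simp only [P, Set.mem_setOf_eq, Set.mem_inter_iff]; tauto
    rw [this]
    exact ((isClosed_le continuous_const continuous_fst).inter
      (isClosed_le continuous_fst continuous_const)).inter
      (((isClosed_le continuous_const continuous_snd).inter
      (isClosed_le continuous_snd continuous_const)).inter
      (isClosed_le (by fun_prop) continuous_const))
  refine ((isCompact_Icc (a := (-1:ℝ)) (b := 1)).prod
    (isCompact_Icc (a := (-1:ℝ)) (b := 1))).of_isClosed_subset hcl ?_
  rintro ⟨x, y⟩ ⟨h1, h2, h3, h4, h5⟩
  exact ⟨⟨h1, h2⟩, ⟨h3, h4⟩⟩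

lemma master_P (g G Φ : ℝ → ℝ) (hg : Continuous g) (hGc : Continuous G)
    (hG : ∀ s, HasDerivAt G (g s) s) (hΦ : ∀ s, HasDerivAt Φ (G s) s) :
    ∫ p in P, g (p.1 + p.2) = G 1 + Φ 1 - 2 * Φ 0 + Φ (-2) := by
  have hf : Continuous fun p : ℝ × ℝ => g (p.1 + p.2) :=
    hg.comp (continuous_fst.add continuous_snd)
  set S1 := {p : ℝ × ℝ | p.1 ∈ Set.Icc (-1:ℝ) 0 ∧ p.2 ∈ Set.Icc (-1:ℝ) 1}
  set S2 := {p : ℝ × ℝ | p.1 ∈ Set.Ioc (0:ℝ) 1 ∧ p.2 ∈ Set.Icc (-1:ℝ) (1 - p.1)}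
  set S2' := {p : ℝ × ℝ | p.1 ∈ Set.Icc (0:ℝ) 1 ∧ p.2 ∈ Set.Icc (-1:ℝ) (1 - p.1)}
  have hPS : P = S1 ∪ S2 := by
    ext ⟨x, y⟩
    simp only [P, S1, S2, Set.mem_setOf_eq, Set.mem_union, Set.mem_Icc, Set.mem_Ioc]
    constructor
    · rintro ⟨h1, h2, h3, h4, h5⟩
      rcases le_or_gt x 0 with hx | hx
      · exact Or.inl ⟨⟨h1, hx⟩, h3, h4⟩
      · exact Or.inr ⟨⟨hx, h2⟩, h3, by linarith⟩
    · rintro (⟨⟨h1, h2⟩, h3, h4⟩ | ⟨⟨h1, h2⟩, h3, h4⟩) <;>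
        refine ⟨by linarith, by linarith, by linarith, by linarith, by linarith⟩
  have hS2m : MeasurableSet S2 := by
    have : S2 = (Prod.fst ⁻¹' Set.Ioc (0:ℝ) 1) ∩
        ({p : ℝ × ℝ | -1 ≤ p.2} ∩ {p | p.2 ≤ 1 - p.1}) := by
      ext p; simp only [S2, Set.mem_setOf_eq, Set.mem_Icc, Set.mem_inter_iff,
        Set.mem_preimage]
    rw [this]
    exact (measurable_fst measurableSet_Ioc).inter
      (((isClosed_le continuous_const continuous_snd).inter
      (isClosed_le continuous_snd (by fun_prop))).measurableSet)
  have hdisj : Disjoint S1 S2 := by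
    rw [Set.disjoint_left]
    rintro p ⟨hp1, _⟩ ⟨hq1, _⟩
    exact absurd hp1.2 (not_le.2 hq1.1)
  have hIntP : IntegrableOn (fun p : ℝ × ℝ => g (p.1 + p.2)) P :=
    hf.continuousOn.integrableOn_compact isCompact_P
  have hI1 : IntegrableOn (fun p : ℝ × ℝ => g (p.1 + p.2)) S1 :=
    hIntP.mono_set (by rw [hPS]; exact Set.subset_union_left)
  have hI2 : IntegrableOn (fun p : ℝ × ℝ => g (p.1 + p.2)) S2 :=
    hIntP.mono_set (by rw [hPS]; exact Set.subset_union_right)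
  have hS2ae : S2 =ᵐ[volume] S2' := by
    rw [Filter.eventuallyEq_set]
    filter_upwards [measure_eq_zero_iff_ae_notMem.1 line_null] with p hp
    simp only [S2, S2', Set.mem_setOf_eq, Set.mem_Ioc, Set.mem_Icc] at *
    constructor
    · rintro ⟨⟨h1, h2⟩, h3⟩; exact ⟨⟨le_of_lt h1, h2⟩, h3⟩
    · rintro ⟨⟨h1, h2⟩, h3⟩
      refine ⟨⟨lt_of_le_of_ne h1 ?_, h2⟩, h3⟩
      intro hx; exact hp hx.symm
  rw [hPS, setIntegral_union hdisj hS2m hI1 hI2, setIntegral_congr_set hS2ae]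
  have e1 : ∫ p in S1, g (p.1 + p.2) = Φ 1 - Φ (-1) - Φ 0 + Φ (-2) := by
    rw [show (∫ p in S1, g (p.1 + p.2)) =
        ∫ x in Set.Icc (-1:ℝ) 0, ∫ y in Set.Icc (-1:ℝ) 1, g (x + y) from
      graphRegion (fun _ => (-1:ℝ)) (fun _ => (1:ℝ)) (by fun_prop) (by fun_prop) _ hf]
    have : ∀ x ∈ Set.Icc (-1:ℝ) 0, (∫ y in Set.Icc (-1:ℝ) 1, g (x + y))
        = G (x + 1) - G (x + -1) := by
      intro x _
      rw [inner_eval g G hg hG x (-1) 1 (by norm_num)]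
    rw [setIntegral_congr_fun measurableSet_Icc this]
    rw [MeasureTheory.integral_Icc_eq_integral_Ioc,
      ← intervalIntegral.integral_of_le (by norm_num : (-1:ℝ) ≤ 0)]
    have hder : ∀ x ∈ Set.uIcc (-1:ℝ) 0,
        HasDerivAt (fun x => Φ (x + 1) - Φ (x + -1)) (G (x + 1) - G (x + -1)) x := by
      intro x _
      have h1 : HasDerivAt (fun x : ℝ => Φ (x + 1)) (G (x + 1)) x := by
        simpa [Function.comp_def] using (hΦ (x + 1)).comp x ((hasDerivAt_id x).add_const 1)
      have h2 : HasDerivAt (fun x : ℝ => Φ (x + -1)) (G (x + -1)) x := by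
        simpa [Function.comp_def] using (hΦ (x + -1)).comp x ((hasDerivAt_id x).add_const (-1))
      exact h1.sub h2
    rw [intervalIntegral.integral_eq_sub_of_hasDerivAt hder
      (((hGc.comp (by fun_prop)).sub (hGc.comp (by fun_prop))).intervalIntegrable (-1) 0)]
    norm_num
    ring
  have e2 : ∫ p in S2', g (p.1 + p.2) = G 1 - Φ 0 + Φ (-1) := by
    rw [show (∫ p in S2', g (p.1 + p.2)) =
        ∫ x in Set.Icc (0:ℝ) 1, ∫ y in Set.Icc (-1:ℝ) (1 - x), g (x + y) from
      graphRegion (fun _ => (-1:ℝ)) (fun x => 1 - x) (by fun_prop) (by fun_prop) _ hf]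
    have : ∀ x ∈ Set.Icc (0:ℝ) 1, (∫ y in Set.Icc (-1:ℝ) (1 - x), g (x + y))
        = G 1 - G (x - 1) := by
      intro x hx
      rw [inner_eval g G hg hG x (-1) (1 - x) (by cases hx; linarith)]
      ring_nf
    rw [setIntegral_congr_fun measurableSet_Icc this]
    rw [MeasureTheory.integral_Icc_eq_integral_Ioc,
      ← intervalIntegral.integral_of_le (by norm_num : (0:ℝ) ≤ 1)]
    have hder : ∀ x ∈ Set.uIcc (0:ℝ) 1,
        HasDerivAt (fun x => x * G 1 - Φ (x - 1)) (G 1 - G (x - 1)) x := by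
      intro x _
      have h1 : HasDerivAt (fun x : ℝ => x * G 1) (G 1) x := by
        simpa using (hasDerivAt_id x).mul_const (G 1)
      have h2 : HasDerivAt (fun x : ℝ => Φ (x - 1)) (G (x - 1)) x := by
        simpa [Function.comp_def] using (hΦ (x - 1)).comp x ((hasDerivAt_id x).sub_const 1)
      exact h1.sub h2
    rw [intervalIntegral.integral_eq_sub_of_hasDerivAt hder
      ((continuous_const.sub (hGc.comp (by fun_prop))).intervalIntegrable 0 1)]
    ring_nf
  rw [e1, e2]; ring

lemma he (c : ℝ) (s : ℝ) :
    HasDerivAt (fun s => Real.exp (-c * s)) (-c * Real.exp (-c * s)) s := by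
  have h1 : HasDerivAt (fun s : ℝ => -c * s) (-c) s := by
    simpa using (hasDerivAt_id s).const_mul (-c)
  simpa [Function.comp_def, mul_comm] using (Real.hasDerivAt_exp (-c * s)).comp s h1

lemma hG1 (c : ℝ) (hc : c ≠ 0) (s : ℝ) :
    HasDerivAt (fun s => -(1/c) * Real.exp (-c * s)) (Real.exp (-c * s)) s := by
  have := (he c s).const_mul (-(1/c))
  convert this using 1 <;> try rfl
  field_simp

lemma hΦ1 (c : ℝ) (hc : c ≠ 0) (s : ℝ) :
    HasDerivAt (fun s => (1/c^2) * Real.exp (-c * s)) (-(1/c) * Real.exp (-c * s)) s := by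
  have := (he c s).const_mul (1/c^2)
  convert this using 1 <;> try rfl
  field_simp

lemma hGJ (c : ℝ) (hc : c ≠ 0) (s : ℝ) :
    HasDerivAt (fun s => -(1/c) * (s * Real.exp (-c * s)) + (-(1/c^2)) * Real.exp (-c * s))
      (s * Real.exp (-c * s)) s := by
  have t1 : HasDerivAt (fun s => s * Real.exp (-c * s))
      (1 * Real.exp (-c * s) + s * (-c * Real.exp (-c * s))) s :=
    (hasDerivAt_id s).mul (he c s)
  have := (t1.const_mul (-(1/c))).add ((he c s).const_mul (-(1/c^2)))
  convert this using 1 <;> try rfl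
  field_simp
  ring

lemma hΦJ (c : ℝ) (hc : c ≠ 0) (s : ℝ) :
    HasDerivAt (fun s => (1/c^2) * (s * Real.exp (-c * s)) + (2/c^3) * Real.exp (-c * s))
      (-(1/c) * (s * Real.exp (-c * s)) + (-(1/c^2)) * Real.exp (-c * s)) s := by
  have t1 : HasDerivAt (fun s => s * Real.exp (-c * s))
      (1 * Real.exp (-c * s) + s * (-c * Real.exp (-c * s))) s :=
    (hasDerivAt_id s).mul (he c s)
  have := (t1.const_mul (1/c^2)).add ((he c s).const_mul (2/c^3))
  convert this using 1 <;> try rfl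
  field_simp
  ring

lemma H_eval (c : ℝ) (hc : c ≠ 0) :
    H c = 3 * (-(1/c) * Real.exp (-c)) - (-(1/c) * Real.exp c)
      - ((1/c^2) * Real.exp (-c) - (1/c^2) * Real.exp c) := by
  have := master_T (fun s => Real.exp (-c * s)) (fun s => -(1/c) * Real.exp (-c * s))
    (fun s => (1/c^2) * Real.exp (-c * s)) (by fun_prop) (by fun_prop)
    (hG1 c hc) (hΦ1 c hc)
  unfold H
  rw [this]
  norm_num

noncomputable def J (c : ℝ) : ℝ := ∫ p in T, (p.1 + p.2) * Real.exp (-c * (p.1 + p.2))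

lemma J_eval (c : ℝ) (hc : c ≠ 0) :
    J c = 3 * (-(1/c) * Real.exp (-c) + (-(1/c^2)) * Real.exp (-c))
      - ((1/c) * Real.exp c + (-(1/c^2)) * Real.exp c)
      - (((1/c^2) * Real.exp (-c) + (2/c^3) * Real.exp (-c))
        - (-(1/c^2) * Real.exp c + (2/c^3) * Real.exp c)) := by
  have := master_T (fun s => s * Real.exp (-c * s))
    (fun s => -(1/c) * (s * Real.exp (-c * s)) + (-(1/c^2)) * Real.exp (-c * s))
    (fun s => (1/c^2) * (s * Real.exp (-c * s)) + (2/c^3) * Real.exp (-c * s))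
    (by fun_prop) (by fun_prop) (hGJ c hc) (hΦJ c hc)
  unfold J
  rw [this]
  ring_nf

lemma F_eval (c : ℝ) (hc : c ≠ 0) :
    F c = -(1/c) * Real.exp (-c) + (1/c^2) * Real.exp (-c) - 2 * (1/c^2)
      + (1/c^2) * Real.exp (2*c) := by
  have := master_P (fun s => Real.exp (-c * s)) (fun s => -(1/c) * Real.exp (-c * s))
    (fun s => (1/c^2) * Real.exp (-c * s)) (by fun_prop) (by fun_prop)
    (hG1 c hc) (hΦ1 c hc)
  unfold F
  rw [this]
  beta_reduce
  rw [show -c * (-2:ℝ) = 2*c by ring]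
  norm_num

lemma isCompact_T : IsCompact T := by
  have hcl : IsClosed T := by
    have : T = ({p : ℝ × ℝ | -1 ≤ p.1} ∩ {p | -1 ≤ p.2}) ∩
        ({p | -1 ≤ p.1 + p.2} ∩ {p | p.1 + p.2 ≤ 1}) := by
      ext p; simp only [T, Set.mem_setOf_eq, Set.mem_inter_iff]; tauto
    rw [this]
    exact ((isClosed_le continuous_const continuous_fst).inter
      (isClosed_le continuous_const continuous_snd)).inter
      ((isClosed_le continuous_const (by fun_prop)).inter
      (isClosed_le (by fun_prop) continuous_const))
  refine ((isCompact_Icc (a := (-1:ℝ)) (b := 2)).prod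
    (isCompact_Icc (a := (-1:ℝ)) (b := 2))).of_isClosed_subset hcl ?_
  rintro ⟨x, y⟩ ⟨h1, h2, h3, h4⟩
  exact ⟨⟨h1, by linarith⟩, ⟨h2, by linarith⟩⟩

lemma H_tangent (a c : ℝ) : H a - (c - a) * J a ≤ H c := by
  have hTm : MeasurableSet T := isCompact_T.isClosed.measurableSet
  have hA : IntegrableOn (fun p : ℝ × ℝ => Real.exp (-a * (p.1 + p.2))) T :=
    (by fun_prop : Continuous fun p : ℝ × ℝ => Real.exp (-a * (p.1 + p.2))).continuousOn.integrableOn_compact isCompact_T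
  have hB : IntegrableOn (fun p : ℝ × ℝ => (p.1 + p.2) * Real.exp (-a * (p.1 + p.2))) T :=
    (by fun_prop : Continuous fun p : ℝ × ℝ => (p.1 + p.2) * Real.exp (-a * (p.1 + p.2))).continuousOn.integrableOn_compact isCompact_T
  have hC : IntegrableOn (fun p : ℝ × ℝ => Real.exp (-c * (p.1 + p.2))) T :=
    (by fun_prop : Continuous fun p : ℝ × ℝ => Real.exp (-c * (p.1 + p.2))).continuousOn.integrableOn_compact isCompact_T
  have key : ∀ s : ℝ, Real.exp (-a * s) - (c - a) * (s * Real.exp (-a * s))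
      ≤ Real.exp (-c * s) := by
    intro s
    have h1 := Real.add_one_le_exp (-(c - a) * s)
    have h2 := (Real.exp_pos (-a * s)).le
    have h3 : Real.exp (-a * s) * Real.exp (-(c - a) * s) = Real.exp (-c * s) := by
      rw [← Real.exp_add]; ring_nf
    nlinarith [mul_le_mul_of_nonneg_left h1 h2]
  have hmono : ∫ p in T, (Real.exp (-a * (p.1 + p.2))
      - (c - a) * ((p.1 + p.2) * Real.exp (-a * (p.1 + p.2)))) ≤ H c := by
    apply setIntegral_mono_on _ hC hTm (fun p _ => key (p.1 + p.2))
    exact hA.sub (hB.const_mul (c - a))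
  calc H a - (c - a) * J a
      = ∫ p in T, (Real.exp (-a * (p.1 + p.2))
        - (c - a) * ((p.1 + p.2) * Real.exp (-a * (p.1 + p.2)))) := by
        unfold H J
        rw [integral_sub hA (hB.const_mul (c - a)), integral_const_mul]
    _ ≤ H c := hmono

lemma exp_52 : 1.68202 ≤ Real.exp (13/25) ∧ Real.exp (13/25) ≤ 1.68203 := by
  have h := Real.exp_bound (x := 13/25) (by rw [abs_le]; norm_num) (n := 8) (by norm_num)
  rw [abs_le] at h
  obtain ⟨h1, h2⟩ := h
  rw [show |(13:ℝ)/25| = 13/25 by rw [abs_of_nonneg]; norm_num] at h1 h2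
  norm_num [Finset.sum_range_succ, Nat.factorial] at h1 h2
  constructor <;> nlinarith [h1, h2]

lemma exp_m52 : 0.59452 ≤ Real.exp (-(13/25)) ∧ Real.exp (-(13/25)) ≤ 0.594521 := by
  have h := Real.exp_bound (x := -(13/25)) (by rw [abs_le]; constructor <;> norm_num) (n := 8) (by norm_num)
  rw [abs_le] at h
  obtain ⟨h1, h2⟩ := h
  rw [show |(-(13/25):ℝ)| = 13/25 by rw [abs_neg, abs_of_nonneg]; norm_num] at h1 h2
  norm_num [Finset.sum_range_succ, Nat.factorial] at h1 h2
  constructor <;> nlinarith [h1, h2]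

lemma exp_54 : 1.716006 ≤ Real.exp (27/50) ∧ Real.exp (27/50) ≤ 1.716007 := by
  have h := Real.exp_bound (x := 27/50) (by rw [abs_le]; norm_num) (n := 8) (by norm_num)
  rw [abs_le] at h
  obtain ⟨h1, h2⟩ := h
  rw [show |(27:ℝ)/50| = 27/50 by rw [abs_of_nonneg]; norm_num] at h1 h2
  norm_num [Finset.sum_range_succ, Nat.factorial] at h1 h2
  constructor <;> nlinarith [h1, h2]

lemma exp_m54 : 0.582747 ≤ Real.exp (-(27/50)) ∧ Real.exp (-(27/50)) ≤ 0.582749 := by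
  have h := Real.exp_bound (x := -(27/50)) (by rw [abs_le]; constructor <;> norm_num) (n := 8) (by norm_num)
  rw [abs_le] at h
  obtain ⟨h1, h2⟩ := h
  rw [show |(-(27/50):ℝ)| = 27/50 by rw [abs_neg, abs_of_nonneg]; norm_num] at h1 h2
  norm_num [Finset.sum_range_succ, Nat.factorial] at h1 h2
  constructor <;> nlinarith [h1, h2]

lemma exp_435 : 1.544962 ≤ Real.exp (87/200) ∧ Real.exp (87/200) ≤ 1.544964 := by
  have h := Real.exp_bound (x := 87/200) (by rw [abs_le]; norm_num) (n := 8) (by norm_num)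
  rw [abs_le] at h
  obtain ⟨h1, h2⟩ := h
  rw [show |(87:ℝ)/200| = 87/200 by rw [abs_of_nonneg]; norm_num] at h1 h2
  norm_num [Finset.sum_range_succ, Nat.factorial] at h1 h2
  constructor <;> nlinarith [h1, h2]

lemma exp_m87 : 0.418934 ≤ Real.exp (-(87/100)) ∧ Real.exp (-(87/100)) ≤ 0.418954 := by
  have h := Real.exp_bound (x := -(87/100)) (by rw [abs_le]; constructor <;> norm_num) (n := 8) (by norm_num)
  rw [abs_le] at h
  obtain ⟨h1, h2⟩ := h
  rw [show |(-(87/100):ℝ)| = 87/100 by rw [abs_neg, abs_of_nonneg]; norm_num] at h1 h2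
  norm_num [Finset.sum_range_succ, Nat.factorial] at h1 h2
  constructor <;> nlinarith [h1, h2]

lemma H_lb : ∀ c : ℝ, (3.826 : ℝ) ≤ H c := by
  have hHa : (3.82654 : ℝ) ≤ H (13/25) := by
    rw [H_eval (13/25) (by norm_num)]
    obtain ⟨u1, u2⟩ := exp_52; obtain ⟨v1, v2⟩ := exp_m52
    nlinarith [u1, u2, v1, v2]
  have hJa : 0 ≤ J (13/25) ∧ J (13/25) ≤ 0.0095 := by
    rw [J_eval (13/25) (by norm_num)]
    obtain ⟨u1, u2⟩ := exp_52; obtain ⟨v1, v2⟩ := exp_m52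
    constructor <;> nlinarith [u1, u2, v1, v2]
  have hHb : (3.82663 : ℝ) ≤ H (27/50) := by
    rw [H_eval (27/50) (by norm_num)]
    obtain ⟨u1, u2⟩ := exp_54; obtain ⟨v1, v2⟩ := exp_m54
    nlinarith [u1, u2, v1, v2]
  have hJb : -0.0153 ≤ J (27/50) ∧ J (27/50) ≤ 0 := by
    rw [J_eval (27/50) (by norm_num)]
    obtain ⟨u1, u2⟩ := exp_54; obtain ⟨v1, v2⟩ := exp_m54
    constructor <;> nlinarith [u1, u2, v1, v2]
  intro c
  rcases le_total c (53/100) with hc | hc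
  · have ht := H_tangent (13/25) c
    have hmul : (c - 13/25) * J (13/25) ≤ (1/100) * J (13/25) :=
      mul_le_mul_of_nonneg_right (by linarith) hJa.1
    nlinarith [hJa.2]
  · have ht := H_tangent (27/50) c
    have hmul : (c - 27/50) * J (27/50) ≤ (-(1/100)) * J (27/50) :=
      mul_le_mul_of_nonpos_right (by linarith) hJb.2
    nlinarith [hJb.1]

lemma F_ub : F (-(87/200)) ≤ 3.3610 := by
  have hF := F_eval (-(87/200)) (by norm_num)
  rw [show -(-(87/200) : ℝ) = 87/200 by norm_num,
    show 2 * (-(87/200) : ℝ) = -(87/100) by norm_num] at hF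
  rw [hF]
  obtain ⟨w1, w2⟩ := exp_435; obtain ⟨x1, x2⟩ := exp_m87
  nlinarith [w1, w2, x1, x2]

/-- On `CP²#(CP²-bar)` the Koiso–Cao soliton has strictly larger Gaussian density
than the Page metric, while on `CP²#2(CP²-bar)` the Wang–Zhu soliton has strictly
smaller Gaussian density than the Chen–LeBrun–Weber metric. -/
theorem stmt_17 :
    sInf (Set.range H) / Real.exp 2 >
        (12 - 3 * sInf (h '' Set.Ioi (0 : ℝ))) / Real.exp 2 ∧
      sInf (Set.range F) / Real.exp 2 <
        (21 / 2 - sInf (f '' Set.Ioi (0 : ℝ))) / Real.exp 2 := by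
  constructor
  · -- Part 1
    have s1 : (3.826 : ℝ) ≤ sInf (Set.range H) := by
      apply le_csInf (Set.range_nonempty H)
      rintro y ⟨c, rfl⟩
      exact H_lb c
    have s2 : (109/40 : ℝ) ≤ sInf (h '' Set.Ioi 0) := by
      apply le_csInf ⟨h 1, Set.mem_image_of_mem h (by norm_num : (1:ℝ) ∈ Set.Ioi 0)⟩
      rintro y ⟨x, hx, rfl⟩
      simp only [Set.mem_Ioi] at hx
      unfold h
      have hD : 0 < x * (6 + 6 * x + x^2) := by nlinarith
      rw [le_div_iff₀ hD]
      nlinarith [mul_nonneg (by linarith : (0:ℝ) ≤ 11*x + 101/3) (sq_nonneg (x - 13/6)), hx.le]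
    have : (12 - 3 * sInf (h '' Set.Ioi (0:ℝ))) < sInf (Set.range H) := by
      nlinarith [s1, s2]
    exact div_lt_div_of_pos_right this (Real.exp_pos 2)
  · -- Part 2
    have hPm : MeasurableSet P := isCompact_P.isClosed.measurableSet
    have hFnn : ∀ c : ℝ, 0 ≤ F c := by
      intro c
      exact setIntegral_nonneg hPm (fun p _ => (Real.exp_pos _).le)
    have s3 : sInf (Set.range F) ≤ F (-(87/200)) :=
      csInf_le ⟨0, by rintro y ⟨c, rfl⟩; exact hFnn c⟩ ⟨-(87/200), rfl⟩
    have s4 : sInf (f '' Set.Ioi 0) ≤ f (24/25) := by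
      apply csInf_le
      · refine ⟨0, ?_⟩
        rintro y ⟨x, hx, rfl⟩
        simp only [Set.mem_Ioi] at hx
        unfold f
        apply div_nonneg
        · nlinarith [pow_nonneg hx.le 2, pow_nonneg hx.le 3, pow_nonneg hx.le 4,
            pow_nonneg hx.le 5, pow_nonneg hx.le 6, hx.le]
        · nlinarith [pow_nonneg hx.le 2, pow_nonneg hx.le 3, pow_nonneg hx.le 4,
            pow_nonneg hx.le 5, pow_nonneg hx.le 6, hx.le]
      · exact ⟨24/25, by norm_num, rfl⟩
    have hfval : f (24/25) < 7.1365 := by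
      unfold f
      norm_num
    have : sInf (Set.range F) < 21/2 - sInf (f '' Set.Ioi (0:ℝ)) := by
      have := F_ub
      nlinarith [s3, s4, hfval]
    exact div_lt_div_of_pos_right this (Real.exp_pos 2)
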